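/- Let R be an associative ring and κ a regular cardinal. For a left R-module F the following are equivalent: (a) every morphism from a κ-presentable left R-module into F factorizes through a projective left R-module; (b) every morphism from a κ-presentable left R-module into F factorizes through a free left R-module with fewer than κ generators; (c) F is the colimit of a κ-filtered diagram of projective left R-modules. -/

import Mathlib

open CategoryTheory CategoryTheory.Limits

universe u

/-- A category `J` is `κ`-filtered if every subdiagram of size `< κ` admits a cocone. -/
def IsCardFiltered (J : Type u) [Category.{u} J] (κ : Cardinal.{u}) : Prop :=
  ∀ (K : Type u) (_ : SmallCategory K), Cardinal.mk K < κ →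
    Cardinal.mk (Σ (a : K) (b : K), a ⟶ b) < κ →
    ∀ F : K ⥤ J, Nonempty (Cocone F)

variable {R : Type u} [Ring R]

/-- A left `R`-module is `κ`-presentable if it is the cokernel of a morphism of free
modules each with fewer than `κ` generators. -/
def IsKappaPresentable (κ : Cardinal.{u}) (E : ModuleCat.{u} R) : Prop :=
  ∃ (X Y : Type u) (_ : Cardinal.mk X < κ) (_ : Cardinal.mk Y < κ)
    (g : (X →₀ R) →ₗ[R] (Y →₀ R)),
    Nonempty ((((Y →₀ R)) ⧸ (LinearMap.range g)) ≃ₗ[R] E)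

/-- Condition (a): every morphism from a `κ`-presentable module into `F` factorizes
through a projective module. -/
def FactorsThroughProjective (κ : Cardinal.{u}) (F : ModuleCat.{u} R) : Prop :=
  ∀ (E : ModuleCat.{u} R), IsKappaPresentable κ E → ∀ φ : E ⟶ F,
    ∃ (P : ModuleCat.{u} R) (_ : Projective P) (α : E ⟶ P) (β : P ⟶ F), α ≫ β = φ

/-- Condition (b): every morphism from a `κ`-presentable module into `F` factorizes
through a free module with fewer than `κ` generators. -/
def FactorsThroughSmallFree (κ : Cardinal.{u}) (F : ModuleCat.{u} R) : Prop :=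
  ∀ (E : ModuleCat.{u} R), IsKappaPresentable κ E → ∀ φ : E ⟶ F,
    ∃ (Z : Type u) (_ : Cardinal.mk Z < κ)
      (α : E ⟶ ModuleCat.of R (Z →₀ R)) (β : ModuleCat.of R (Z →₀ R) ⟶ F), α ≫ β = φ

/-- Condition (c): `F` is the colimit of a `κ`-filtered diagram of projective modules. -/
def IsKappaFilteredColimitOfProjectives (κ : Cardinal.{u}) (F : ModuleCat.{u} R) : Prop :=
  ∃ (J : Type u) (_ : SmallCategory J) (_ : IsCardFiltered J κ)
    (D : J ⥤ ModuleCat.{u} R) (_ : ∀ j, Projective (D.obj j))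
    (c : Cocone D) (_ : IsColimit c), Nonempty (c.pt ≅ F)

/-! ### Auxiliary lemmas -/

lemma KappaFlat.mk_sigma_hom_le (K : Type u) [SmallCategory K]
    (h : ∀ a b : K, Subsingleton (a ⟶ b)) :
    Cardinal.mk (Σ (a : K) (b : K), a ⟶ b) ≤ Cardinal.mk K * Cardinal.mk K := by
  calc Cardinal.mk (Σ (a : K) (b : K), a ⟶ b)
      = Cardinal.sum (fun a : K => Cardinal.mk (Σ b : K, a ⟶ b)) := Cardinal.mk_sigma _
    _ ≤ Cardinal.sum (fun _ : K => Cardinal.mk K) := by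
        apply Cardinal.sum_le_sum
        intro a
        calc Cardinal.mk (Σ b : K, a ⟶ b)
            = Cardinal.sum (fun b : K => Cardinal.mk (a ⟶ b)) := Cardinal.mk_sigma _
          _ ≤ Cardinal.sum (fun _ : K => (1 : Cardinal.{u})) :=
              Cardinal.sum_le_sum _ _ fun b => Cardinal.le_one_iff_subsingleton.mpr (h a b)
          _ = Cardinal.mk K * 1 := Cardinal.sum_const' _ _
          _ = Cardinal.mk K := mul_one _
    _ = Cardinal.mk K * Cardinal.mk K := Cardinal.sum_const' _ _

lemma KappaFlat.mk_discrete (Y : Type u) : Cardinal.mk (Discrete Y) = Cardinal.mk Y :=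
  Cardinal.mk_congr ⟨Discrete.as, Discrete.mk, fun _ => rfl, fun _ => rfl⟩

lemma KappaFlat.isFiltered_of_isCardFiltered {J : Type u} [SmallCategory J] {κ : Cardinal.{u}}
    (hJ : IsCardFiltered J κ) (hκ : κ.IsRegular) : IsFiltered J := by
  apply IsFiltered.of_cocone_nonempty.{u}
  intro K _ _ F
  refine hJ K _ ?_ ?_ F
  · exact lt_of_lt_of_le (Cardinal.lt_aleph0_of_finite K) hκ.aleph0_le
  · exact lt_of_lt_of_le (Cardinal.lt_aleph0_of_finite _) hκ.aleph0_le

lemma KappaFlat.single_eq_smul {R : Type u} [Ring R] {Z : Type u} (z : Z) (c : R) :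
    Finsupp.single z c = c • Finsupp.single z (1 : R) := by
  rw [Finsupp.smul_single, smul_eq_mul, mul_one]

open KappaFlat in
/-- Any map from a `κ`-presented module to a `κ`-filtered colimit factors through a stage. -/
lemma KappaFlat.factor_through_stage {κ : Cardinal.{u}} (hκ : κ.IsRegular)
    {J : Type u} [SmallCategory J] (hJ : IsCardFiltered J κ)
    (D : J ⥤ ModuleCat.{u} R) (c : Cocone D) (hc : IsColimit c)
    {X Y : Type u} (hX : Cardinal.mk X < κ) (hY : Cardinal.mk Y < κ)
    (g : (X →₀ R) →ₗ[R] (Y →₀ R))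
    (ψ : ((Y →₀ R) ⧸ LinearMap.range g) →ₗ[R] c.pt) :
    ∃ (j : J) (χ : ((Y →₀ R) ⧸ LinearMap.range g) →ₗ[R] D.obj j),
      (c.ι.app j).hom.comp χ = ψ := by
  letI := isFiltered_of_isCardFiltered hJ hκ
  have cocone_sub : ∀ (K : Type u) (_ : SmallCategory K),
      (∀ a b : K, Subsingleton (a ⟶ b)) → Cardinal.mk K < κ → ∀ F : K ⥤ J,
      Nonempty (Cocone F) := by
    intro K _ hs hK F
    exact hJ K _ hK (lt_of_le_of_lt (mk_sigma_hom_le K hs)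
      (Cardinal.mul_lt_of_lt hκ.aleph0_le hK hK)) F
  set Q := (Y →₀ R) ⧸ LinearMap.range g
  set mkQ := (LinearMap.range g).mkQ
  set ψY : (Y →₀ R) →ₗ[R] c.pt := ψ.comp mkQ with hψY
  -- step 1: representatives for generators
  have hrep : ∀ y : Y, ∃ (j : J) (p : D.obj j), c.ι.app j p = ψY (Finsupp.single y 1) :=
    fun y => Concrete.isColimit_exists_rep D hc _
  choose jy py hpy using hrep
  -- step 2: cocone over the discrete diagram
  obtain ⟨cn⟩ := cocone_sub (Discrete Y) _ (fun _ _ => inferInstance)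
    ((mk_discrete Y).trans_lt hY) (Discrete.functor jy)
  set j₀ := cn.pt
  set t : ∀ y : Y, jy y ⟶ j₀ := fun y => cn.ι.app ⟨y⟩
  set ψ₀ : (Y →₀ R) →ₗ[R] D.obj j₀ :=
    Finsupp.linearCombination R (fun y => D.map (t y) (py y)) with hψ₀
  have h₀ : (c.ι.app j₀).hom.comp ψ₀ = ψY := by
    apply Finsupp.lhom_ext
    intro y b
    have hw : c.ι.app j₀ (D.map (t y) (py y)) = c.ι.app (jy y) (py y) :=
      ConcreteCategory.congr_hom (c.w (t y)) (py y)
    calc (c.ι.app j₀) (ψ₀ (Finsupp.single y b))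
        = (c.ι.app j₀) (b • D.map (t y) (py y)) := by
          rw [hψ₀]; simp [Finsupp.linearCombination_single]
      _ = b • (c.ι.app j₀) (D.map (t y) (py y)) := map_smul _ _ _
      _ = b • c.ι.app (jy y) (py y) := by rw [hw]
      _ = b • ψY (Finsupp.single y 1) := by rw [hpy]
      _ = ψY (Finsupp.single y b) := by rw [single_eq_smul y b, map_smul]
  -- step 3: relations die
  have hrel : ∀ x : X, ∃ (k : J) (f : j₀ ⟶ k), D.map f (ψ₀ (g (Finsupp.single x 1))) = 0 := by
    intro x
    have h1 : c.ι.app j₀ (ψ₀ (g (Finsupp.single x 1))) = c.ι.app j₀ (0 : D.obj j₀) := by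
      have : (c.ι.app j₀) (ψ₀ (g (Finsupp.single x 1))) = ψY (g (Finsupp.single x 1)) := by
        have := congrArg (fun (f : (Y →₀ R) →ₗ[R] c.pt) => f (g (Finsupp.single x 1))) h₀
        simpa using this
      rw [this, map_zero, hψY]
      have : mkQ (g (Finsupp.single x 1)) = 0 := by
        rw [← LinearMap.mem_ker, Submodule.ker_mkQ]
        exact LinearMap.mem_range_self _ _
      simp [LinearMap.comp_apply, this]
    obtain ⟨k, f, f', hff⟩ := Concrete.isColimit_exists_of_rep_eq.{u} D hc _ _ h1
    refine ⟨k, f, ?_⟩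
    have hff' : D.map f (ψ₀ (g (Finsupp.single x 1))) = D.map f' (0 : D.obj j₀) := hff
    rw [hff', map_zero]
  choose kx fx hfx using hrel
  -- step 4: cocone over the wide span
  obtain ⟨cw⟩ := cocone_sub (WidePushoutShape X) _ (fun _ _ => inferInstance)
    (by change Cardinal.mk (Option X) < κ
        rw [Cardinal.mk_option]
        exact Cardinal.add_lt_of_lt hκ.aleph0_le hX
          (lt_of_lt_of_le Cardinal.one_lt_aleph0 hκ.aleph0_le))
    (WidePushoutShape.wideSpan j₀ kx fx)
  set j₁ := cw.pt
  set w : j₀ ⟶ j₁ := cw.ι.app none with hwdef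
  have hkill : ∀ x : X, D.map w (ψ₀ (g (Finsupp.single x 1))) = 0 := by
    intro x
    have hnat := cw.ι.naturality (WidePushoutShape.Hom.init x)
    have hw2 : fx x ≫ cw.ι.app (some x) = w := by simp at hnat; exact hnat
    rw [← hw2]
    have : D.map (fx x ≫ cw.ι.app (some x)) = D.map (fx x) ≫ D.map (cw.ι.app (some x)) :=
      D.map_comp _ _
    rw [this]
    show D.map (cw.ι.app (some x)) (D.map (fx x) (ψ₀ (g (Finsupp.single x 1)))) = 0
    exact (congrArg (D.map (cw.ι.app (some x))) (hfx x)).trans (map_zero _)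
  set ψ₁ : (Y →₀ R) →ₗ[R] D.obj j₁ := (D.map w).hom.comp ψ₀
  have hker : LinearMap.range g ≤ LinearMap.ker ψ₁ := by
    rw [LinearMap.range_le_ker_iff]
    apply Finsupp.lhom_ext
    intro x b
    calc ψ₁ (g (Finsupp.single x b)) = b • ψ₁ (g (Finsupp.single x 1)) := by
          rw [single_eq_smul x b, map_smul, map_smul]
      _ = 0 := by
          show b • (D.map w) (ψ₀ (g (Finsupp.single x 1))) = 0
          rw [hkill, smul_zero]
  refine ⟨j₁, Submodule.liftQ _ ψ₁ hker, ?_⟩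
  apply Submodule.linearMap_qext
  rw [LinearMap.comp_assoc]
  have : (Submodule.liftQ (LinearMap.range g) ψ₁ hker).comp mkQ = ψ₁ :=
    Submodule.liftQ_mkQ _ _ _
  rw [this]
  show (c.ι.app j₁).hom.comp ((D.map w).hom.comp ψ₀) = ψ.comp mkQ
  rw [← LinearMap.comp_assoc]
  have hcw : (c.ι.app j₁).hom.comp (D.map w).hom = (c.ι.app j₀).hom :=
    congrArg ModuleCat.Hom.hom (c.w w)
  rw [hcw, h₀, hψY]

/-! ### The canonical diagram of small free modules over `F` -/

/-- Objects: free modules on small subsets of `κ.out`, with a map to `F`. -/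
structure SmallFreeOver (κ : Cardinal.{u}) (F : ModuleCat.{u} R) : Type u where
  Z : Set (Quotient.out κ)
  hZ : Cardinal.mk Z < κ
  β : (Z →₀ R) →ₗ[R] F

noncomputable instance (κ : Cardinal.{u}) (F : ModuleCat.{u} R) : SmallCategory (SmallFreeOver κ F) where
  Hom A B := {u : (A.Z →₀ R) →ₗ[R] (B.Z →₀ R) // B.β.comp u = A.β}
  id A := ⟨LinearMap.id, LinearMap.comp_id _⟩
  comp {A B C} f g := ⟨g.1.comp f.1, by rw [← LinearMap.comp_assoc, g.2, f.2]⟩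

namespace SmallFreeOver

open KappaFlat

variable (κ : Cardinal.{u}) (F : ModuleCat.{u} R)

/-- The canonical diagram. -/
noncomputable def diag : SmallFreeOver κ F ⥤ ModuleCat.{u} R where
  obj A := ModuleCat.of R (A.Z →₀ R)
  map {A B} f := ModuleCat.ofHom (f.1 : (A.Z →₀ R) →ₗ[R] (B.Z →₀ R))
  map_id _ := rfl
  map_comp _ _ := rfl

/-- The canonical cocone to `F`. -/
noncomputable def coconeF : Cocone (diag κ F) where
  pt := F
  ι := { app := fun A => ModuleCat.ofHom (Y := F) (A.β : (A.Z →₀ R) →ₗ[R] F)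
         naturality := fun A B f => by
           apply ModuleCat.hom_ext
           apply LinearMap.ext
           intro v
           exact DFunLike.congr_fun f.2 v }

/-- Realize any small free module over `F` as an object. -/
lemma toObj (Z' : Type u) (h : Cardinal.mk Z' < κ)
    (β' : (Z' →₀ R) →ₗ[R] F) :
    ∃ (A : SmallFreeOver κ F) (e : (Z' →₀ R) ≃ₗ[R] (A.Z →₀ R)),
      A.β.comp (e : (Z' →₀ R) →ₗ[R] (A.Z →₀ R)) = β' := by
  have hle : Cardinal.mk Z' ≤ Cardinal.mk (Quotient.out κ) := by
    rw [Cardinal.mk_out]; exact h.le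
  obtain ⟨f⟩ := (Cardinal.le_def _ _).mp hle
  set e0 : Z' ≃ Set.range f := Equiv.ofInjective f f.injective
  set e : (Z' →₀ R) ≃ₗ[R] ((Set.range f : Set (Quotient.out κ)) →₀ R) :=
    Finsupp.domLCongr e0
  refine ⟨⟨Set.range f, ?_, β'.comp (e.symm : _ →ₗ[R] _)⟩, e, ?_⟩
  · rwa [Cardinal.mk_range_eq f f.injective]
  · apply LinearMap.ext
    intro v
    show β' (e.symm (e v)) = β' v
    rw [LinearEquiv.symm_apply_apply]

variable {κ F}

lemma isCardFiltered (hκ : κ.IsRegular) (hb : FactorsThroughSmallFree κ F) :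
    IsCardFiltered (SmallFreeOver κ F) κ := by
  intro K iK hK hK2 G
  classical
  set Y : Type u := Σ k : K, ((G.obj k).Z : Type u) with hYdef
  set X : Type u := Σ f : (Σ (a : K) (b : K), a ⟶ b), ((G.obj f.1).Z : Type u) with hXdef
  have hY : Cardinal.mk Y < κ := by
    rw [hYdef, Cardinal.mk_sigma]
    exact Cardinal.sum_lt_of_isRegular hκ hK (fun k => (G.obj k).hZ)
  have hX : Cardinal.mk X < κ := by
    rw [hXdef, Cardinal.mk_sigma]
    exact Cardinal.sum_lt_of_isRegular hκ hK2 (fun f => (G.obj f.1).hZ)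
  -- embeddings into the big free module
  set emb : ∀ k : K, (((G.obj k).Z : Type u) →₀ R) →ₗ[R] (Y →₀ R) :=
    fun k => Finsupp.lmapDomain R R (fun z => (⟨k, z⟩ : Y)) with hembdef
  set g : (X →₀ R) →ₗ[R] (Y →₀ R) :=
    Finsupp.linearCombination R (fun x : X =>
      emb x.1.2.1 ((G.map x.1.2.2).1 (Finsupp.single x.2 1))
      - emb x.1.1 (Finsupp.single x.2 1)) with hgdef
  set βbar : (Y →₀ R) →ₗ[R] F :=
    Finsupp.linearCombination R (fun y : Y => (G.obj y.1).β (Finsupp.single y.2 1)) with hβbardef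
  have hembβ : ∀ k : K, βbar.comp (emb k) = (G.obj k).β := by
    intro k
    apply Finsupp.lhom_ext
    intro z b
    show βbar (Finsupp.mapDomain (fun z => (⟨k, z⟩ : Y)) (Finsupp.single z b))
      = (G.obj k).β (Finsupp.single z b)
    rw [Finsupp.mapDomain_single]
    rw [single_eq_smul (⟨k, z⟩ : Y) b, map_smul, single_eq_smul z b, map_smul]
    congr 1
    show βbar (Finsupp.single (⟨k, z⟩ : Y) 1) = _
    rw [hβbardef, Finsupp.linearCombination_single, one_smul]
  have hker : βbar.comp g = 0 := by
    apply Finsupp.lhom_ext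
    intro x b
    rw [LinearMap.comp_apply, single_eq_smul x b, map_smul, map_smul]
    show b • βbar (g (Finsupp.single x 1)) = (0 : (X →₀ R) →ₗ[R] F) (Finsupp.single x b)
    rw [LinearMap.zero_apply]
    have : g (Finsupp.single x 1) =
        emb x.1.2.1 ((G.map x.1.2.2).1 (Finsupp.single x.2 1))
        - emb x.1.1 (Finsupp.single x.2 1) := by
      rw [hgdef, Finsupp.linearCombination_single, one_smul]
    rw [this, map_sub]
    have h1 : βbar (emb x.1.2.1 ((G.map x.1.2.2).1 (Finsupp.single x.2 1)))
        = (G.obj x.1.2.1).β ((G.map x.1.2.2).1 (Finsupp.single x.2 1)) :=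
      DFunLike.congr_fun (hembβ x.1.2.1) _
    have h2 : βbar (emb x.1.1 (Finsupp.single x.2 1))
        = (G.obj x.1.1).β (Finsupp.single x.2 1) := DFunLike.congr_fun (hembβ x.1.1) _
    rw [h1, h2]
    have h3 : (G.obj x.1.2.1).β ((G.map x.1.2.2).1 (Finsupp.single x.2 1))
        = (G.obj x.1.1).β (Finsupp.single x.2 1) := DFunLike.congr_fun (G.map x.1.2.2).2 _
    rw [h3, sub_self, smul_zero]
  -- the κ-presentable module
  set Q : Type u := (Y →₀ R) ⧸ LinearMap.range g with hQdef
  set φ : Q →ₗ[R] F := Submodule.liftQ _ βbar (LinearMap.range_le_ker_iff.mpr hker) with hφdef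
  obtain ⟨Z', hZ', α, β', hαβ⟩ := hb (ModuleCat.of R Q)
    ⟨X, Y, hX, hY, g, ⟨LinearEquiv.refl R Q⟩⟩ (ModuleCat.ofHom (Y := F) φ)
  obtain ⟨A, e, hA⟩ := toObj κ F Z' hZ' β'.hom
  -- the cocone
  set mkQ := (LinearMap.range g).mkQ
  set αl : Q →ₗ[R] (Z' →₀ R) := α.hom with hαl
  set leg : ∀ k : K, (((G.obj k).Z : Type u) →₀ R) →ₗ[R] ((A.Z : Type u) →₀ R) :=
    fun k => (e : _ →ₗ[R] _).comp (αl.comp (mkQ.comp (emb k))) with hlegdef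
  have hlegβ : ∀ k : K, A.β.comp (leg k) = (G.obj k).β := by
    intro k
    apply LinearMap.ext
    intro v
    show A.β (e (α (mkQ (emb k v)))) = (G.obj k).β v
    have h1 : A.β (e (α (mkQ (emb k v)))) = β' (α (mkQ (emb k v))) :=
      DFunLike.congr_fun hA _
    have h2 : β' (α (mkQ (emb k v))) = φ (mkQ (emb k v)) := ConcreteCategory.congr_hom hαβ _
    have h3 : φ (mkQ (emb k v)) = βbar (emb k v) := rfl
    rw [h1, h2, h3]
    exact DFunLike.congr_fun (hembβ k) v
  refine ⟨⟨A, { app := fun k => (⟨leg k, hlegβ k⟩ : G.obj k ⟶ A), naturality := ?_ }⟩⟩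
  intro a b f
  apply Subtype.ext
  show (leg b).comp (G.map f).1 = leg a
  have key : (mkQ.comp (emb b)).comp (G.map f).1 = mkQ.comp (emb a) := by
    apply Finsupp.lhom_ext
    intro z c
    show mkQ (emb b ((G.map f).1 (Finsupp.single z c))) = mkQ (emb a (Finsupp.single z c))
    rw [← sub_eq_zero, ← map_sub, ← LinearMap.mem_ker, Submodule.ker_mkQ]
    refine ⟨Finsupp.single (⟨⟨a, b, f⟩, z⟩ : X) c, ?_⟩
    have e1 : g (Finsupp.single (⟨⟨a, b, f⟩, z⟩ : X) c)
        = c • (emb b ((G.map f).1 (Finsupp.single z 1)) - emb a (Finsupp.single z 1)) := by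
      rw [single_eq_smul (⟨⟨a, b, f⟩, z⟩ : X) c, map_smul]
      congr 1
      rw [hgdef, Finsupp.linearCombination_single, one_smul]
    have e2 : emb b ((G.map f).1 (Finsupp.single z c)) - emb a (Finsupp.single z c)
        = c • (emb b ((G.map f).1 (Finsupp.single z 1)) - emb a (Finsupp.single z 1)) := by
      rw [single_eq_smul z c, map_smul, map_smul, map_smul, smul_sub]
    rw [e1, e2]
  apply LinearMap.ext
  intro v
  exact congrArg (fun t => e (αl t)) (DFunLike.congr_fun key v)

end SmallFreeOver

/-! ### The main theorem -/

open KappaFlat SmallFreeOver in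
theorem kappaFlat_tfae (κ : Cardinal.{u}) (hκ : κ.IsRegular) (F : ModuleCat.{u} R) :
    (FactorsThroughProjective κ F ↔ FactorsThroughSmallFree κ F) ∧
    (FactorsThroughProjective κ F ↔ IsKappaFilteredColimitOfProjectives κ F) := by
  -- (b) → (a)
  have b_to_a : FactorsThroughSmallFree κ F → FactorsThroughProjective κ F := by
    intro hb E hE φ
    obtain ⟨Z, hZ, α, β, hαβ⟩ := hb E hE φ
    refine ⟨ModuleCat.of R (Z →₀ R), ?_, α, β, hαβ⟩
    exact ModuleCat.projective_of_free (M := ModuleCat.of R (Z →₀ R)) Finsupp.basisSingleOne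
  -- (a) → (b)
  have a_to_b : FactorsThroughProjective κ F → FactorsThroughSmallFree κ F := by
    intro ha E hE φ
    obtain ⟨X, Y, hX, hY, g, ⟨eq⟩⟩ := hE
    obtain ⟨P, hP, α, β, hαβ⟩ := ha E ⟨X, Y, hX, hY, g, ⟨eq⟩⟩ φ
    have hmp : Module.Projective R P := by
      rw [IsProjective.iff_projective]
      exact hP
    obtain ⟨s, hs⟩ := Module.projective_def'.mp hmp
    set σ : E →ₗ[R] (P →₀ R) := s.comp α.hom with hσ
    set gen : Y → E := fun y => eq ((LinearMap.range g).mkQ (Finsupp.single y 1)) with hgen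
    set T : Set P := ⋃ y : Y, ((σ (gen y)).support : Set P) with hT
    have hTcard : Cardinal.mk T < κ := by
      refine lt_of_le_of_lt Cardinal.mk_iUnion_le_sum_mk ?_
      refine Cardinal.sum_lt_of_isRegular hκ hY ?_
      intro y
      exact lt_of_lt_of_le (Cardinal.lt_aleph0_of_finite _) hκ.aleph0_le
    have hmem : ∀ v : E, σ v ∈ Finsupp.supported R R T := by
      have hsub : ∀ u : (Y →₀ R),
          σ (eq ((LinearMap.range g).mkQ u)) ∈ Finsupp.supported R R T := by
        intro u
        induction u using Finsupp.induction_linear with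
        | zero => simp
        | add u v hu hv => rw [map_add, map_add, map_add]; exact add_mem hu hv
        | single y b =>
          rw [single_eq_smul y b, map_smul, map_smul, map_smul]
          refine Submodule.smul_mem _ _ ?_
          have : σ (gen y) ∈ Finsupp.supported R R T := by
            rw [Finsupp.mem_supported]
            exact Set.subset_iUnion (fun y : Y => ((σ (gen y)).support : Set P)) y
          exact this
      intro v
      obtain ⟨q, rfl⟩ := eq.surjective v
      obtain ⟨u, rfl⟩ := (LinearMap.range g).mkQ_surjective q
      exact hsub u
    set eT : (Finsupp.supported R R T) ≃ₗ[R] (T →₀ R) := Finsupp.supportedEquivFinsupp T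
    refine ⟨T, hTcard,
      ModuleCat.ofHom (X := E) (eT.toLinearMap.comp (σ.codRestrict _ hmem) : E →ₗ[R] (T →₀ R)),
      ModuleCat.ofHom (Y := F) (β.hom.comp ((Finsupp.linearCombination R id).comp
        ((Finsupp.supported R R T).subtype.comp eT.symm.toLinearMap))), ?_⟩
    show ModuleCat.ofHom (X := E) (Y := F) ((β.hom.comp ((Finsupp.linearCombination R id).comp
        ((Finsupp.supported R R T).subtype.comp eT.symm.toLinearMap))).comp
        (eT.toLinearMap.comp (σ.codRestrict _ hmem))) = φ
    apply ModuleCat.hom_ext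
    apply LinearMap.ext
    intro v
    simp only [ModuleCat.hom_ofHom, LinearMap.comp_apply, LinearEquiv.coe_coe, LinearEquiv.symm_apply_apply]
    have h1 : ((Finsupp.supported R R T).subtype) (σ.codRestrict _ hmem v) = σ v := rfl
    rw [h1]
    have h2' : Finsupp.linearCombination R id (σ v) = α v := by
      have := DFunLike.congr_fun hs (α v)
      exact this
    rw [h2']
    exact ConcreteCategory.congr_hom hαβ v
  -- (c) → (a)
  have c_to_a : IsKappaFilteredColimitOfProjectives κ F → FactorsThroughProjective κ F := by
    rintro ⟨J, iJ, hJ, D, hproj, c, hc, ⟨iso⟩⟩ E hE φ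
    obtain ⟨X, Y, hX, hY, g, ⟨eq⟩⟩ := hE
    set ψ : ((Y →₀ R) ⧸ LinearMap.range g) →ₗ[R] c.pt :=
      (iso.inv.hom).comp (φ.hom.comp eq.toLinearMap) with hψ
    obtain ⟨j, χ, hχ⟩ := factor_through_stage hκ hJ D c hc hX hY g ψ
    refine ⟨D.obj j, hproj j, ModuleCat.ofHom (X := E) (Y := D.obj j) (χ.comp eq.symm.toLinearMap : E →ₗ[R] D.obj j),
      c.ι.app j ≫ iso.hom, ?_⟩
    apply ModuleCat.hom_ext
    apply LinearMap.ext
    intro v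
    show iso.hom (c.ι.app j (χ (eq.symm v))) = φ v
    have h1 : c.ι.app j (χ (eq.symm v)) = ψ (eq.symm v) := DFunLike.congr_fun hχ _
    rw [h1, hψ]
    show iso.hom (iso.inv (φ (eq (eq.symm v)))) = φ v
    rw [LinearEquiv.apply_symm_apply]
    exact ConcreteCategory.congr_hom iso.inv_hom_id (φ v)
  -- (b) → (c)
  have b_to_c : FactorsThroughSmallFree κ F → IsKappaFilteredColimitOfProjectives κ F := by
    intro hb
    have hcf : IsCardFiltered (SmallFreeOver κ F) κ := isCardFiltered hκ hb
    letI := isFiltered_of_isCardFiltered hcf hκ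
    set desc := colimit.desc (diag κ F) (coconeF κ F) with hdesc
    have hι : ∀ (A : SmallFreeOver κ F) (v : ((A.Z : Type u) →₀ R)),
        desc (colimit.ι (diag κ F) A v) = A.β v := by
      intro A v
      exact ConcreteCategory.congr_hom (colimit.ι_desc (coconeF κ F) A) v
    have hsurj : Function.Surjective desc := by
      intro f
      obtain ⟨A, e, hA⟩ := toObj κ F (PUnit : Type u)
        (by rw [Cardinal.mk_punit]
            exact lt_of_lt_of_le Cardinal.one_lt_aleph0 hκ.aleph0_le)
        (Finsupp.linearCombination R (fun _ : PUnit => f))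
      refine ⟨colimit.ι (diag κ F) A (e (Finsupp.single PUnit.unit 1)), ?_⟩
      rw [hι]
      have h5 : A.β (e (Finsupp.single PUnit.unit 1))
          = Finsupp.linearCombination R (fun _ : PUnit => f) (Finsupp.single PUnit.unit 1) :=
        DFunLike.congr_fun hA _
      rw [h5, Finsupp.linearCombination_single, one_smul]
    have hinj : Function.Injective desc := by
      rw [injective_iff_map_eq_zero]
      intro x hx
      obtain ⟨A, ξ, rfl⟩ := Concrete.colimit_exists_rep.{u} (diag κ F) x
      change ((A.Z : Type u) →₀ R) at ξ
      have hβξ : A.β ξ = 0 := by rw [← hι A ξ]; exact hx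
      set g1 : ((PUnit : Type u) →₀ R) →ₗ[R] ((A.Z : Type u) →₀ R) :=
        Finsupp.linearCombination R (fun _ => ξ) with hg1
      have hk : A.β.comp g1 = 0 := by
        apply Finsupp.lhom_ext
        intro p b
        rw [LinearMap.comp_apply, hg1, Finsupp.linearCombination_single, map_smul, hβξ,
          smul_zero, LinearMap.zero_apply]
      set Q1 : Type u := ((A.Z : Type u) →₀ R) ⧸ LinearMap.range g1 with hQ1
      set φ1 : Q1 →ₗ[R] F := Submodule.liftQ _ A.β (LinearMap.range_le_ker_iff.mpr hk) with hφ1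
      obtain ⟨Z', hZ', α, β', hαβ⟩ := hb (ModuleCat.of R Q1)
        ⟨PUnit, A.Z, by rw [Cardinal.mk_punit]
                        exact lt_of_lt_of_le Cardinal.one_lt_aleph0 hκ.aleph0_le,
          A.hZ, g1, ⟨LinearEquiv.refl R Q1⟩⟩ (ModuleCat.ofHom (Y := F) φ1)
      obtain ⟨A', e, hA'⟩ := toObj κ F Z' hZ' β'.hom
      set αl : Q1 →ₗ[R] (Z' →₀ R) := α.hom with hαl
      set mkQ1 := (LinearMap.range g1).mkQ with hmkQ1
      have hβcomp : A'.β.comp ((e : _ →ₗ[R] _).comp (αl.comp mkQ1)) = A.β := by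
        apply LinearMap.ext
        intro v
        show A'.β (e (α (mkQ1 v))) = A.β v
        have h1 : A'.β (e (α (mkQ1 v))) = β' (α (mkQ1 v)) := DFunLike.congr_fun hA' _
        have h2 : β' (α (mkQ1 v)) = φ1 (mkQ1 v) := ConcreteCategory.congr_hom hαβ _
        rw [h1, h2]
        rfl
      set t : A ⟶ A' := ⟨(e : _ →ₗ[R] _).comp (αl.comp mkQ1), hβcomp⟩ with ht
      have hξ0 : t.1 ξ = 0 := by
        have hmem : ξ ∈ LinearMap.range g1 := by
          refine ⟨Finsupp.single PUnit.unit 1, ?_⟩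
          rw [hg1, Finsupp.linearCombination_single, one_smul]
        have : mkQ1 ξ = 0 := by
          rw [hmkQ1, ← LinearMap.mem_ker, Submodule.ker_mkQ]
          exact hmem
        show e (α (mkQ1 ξ)) = 0
        rw [this, map_zero, map_zero]
      have hw : colimit.ι (diag κ F) A' (t.1 ξ) = colimit.ι (diag κ F) A ξ :=
        ConcreteCategory.congr_hom (colimit.w (diag κ F) t) ξ
      calc colimit.ι (diag κ F) A ξ
          = colimit.ι (diag κ F) A' (t.1 ξ) := hw.symm
        _ = 0 := by rw [hξ0]; exact map_zero _
    refine ⟨SmallFreeOver κ F, inferInstance, hcf, diag κ F,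
      fun A => ModuleCat.projective_of_free (M := ModuleCat.of R ((A.Z : Type u) →₀ R))
        Finsupp.basisSingleOne,
      colimit.cocone (diag κ F), colimit.isColimit _, ?_⟩
    let Mcol : ModuleCat.{u} R := colimit (diag κ F)
    set eL := LinearEquiv.ofBijective
      (show (Mcol : Type u) →ₗ[R] (F : Type u) from desc.hom)
      ⟨hinj, hsurj⟩ with heL
    exact ⟨{ hom := desc
             inv := ModuleCat.ofHom (X := F) (Y := Mcol) eL.symm.toLinearMap
             hom_inv_id := by
               apply ModuleCat.hom_ext
               apply LinearMap.ext
               intro x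
               exact eL.symm_apply_apply x
             inv_hom_id := by
               apply ModuleCat.hom_ext
               apply LinearMap.ext
               intro x
               exact eL.apply_symm_apply x }⟩
  exact ⟨⟨a_to_b, b_to_a⟩, ⟨fun ha => b_to_c (a_to_b ha), c_to_a⟩⟩
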